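/- All eigenvalues of the Brehm–Wintner–Conley matrix Z are real and nonnegative, and 0 is an eigenvalue with eigenvector U (acting on the right as U·Z = 0). -/

import Mathlib

open Finset Matrix

noncomputable def BWC (n : ℕ) (m : Fin n → ℝ) (S : Fin n → Fin n → ℝ) :
    Matrix (Fin n) (Fin n) ℝ :=
  Matrix.of fun i j => if i = j then ∑ k ∈ Finset.univ.erase i, m k * S i k
    else -(m i * S i j)

theorem stmt2 (n : ℕ) (hn : 2 ≤ n) (m : Fin n → ℝ) (S : Fin n → Fin n → ℝ)
    (hm : ∀ i, 0 < m i) (hSpos : ∀ i j, i ≠ j → 0 < S i j)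
    (hSsymm : ∀ i j, S i j = S j i) :
    Matrix.vecMul (fun _ => (1 : ℝ)) (BWC n m S) = 0 ∧
    ∀ (c : ℂ) (v : Fin n → ℂ), v ≠ 0 →
      Matrix.vecMul v ((BWC n m S).map (fun x => (x : ℂ))) = c • v →
      ∃ r : ℝ, 0 ≤ r ∧ c = (r : ℂ) := by
  constructor
  · funext j
    simp only [Matrix.vecMul, dotProduct, BWC, Matrix.of_apply, one_mul, Pi.zero_apply]
    rw [← Finset.add_sum_erase _ _ (Finset.mem_univ j)]
    rw [if_pos rfl]
    have h1 : ∑ i ∈ Finset.univ.erase j,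
        (if i = j then ∑ k ∈ Finset.univ.erase i, m k * S i k else -(m i * S i j))
        = ∑ i ∈ Finset.univ.erase j, -(m i * S i j) := by
      apply Finset.sum_congr rfl
      intro i hi
      rw [if_neg (Finset.ne_of_mem_erase hi)]
    rw [h1]
    have h2 : ∑ k ∈ Finset.univ.erase j, m k * S j k
        = ∑ k ∈ Finset.univ.erase j, m k * S k j := by
      apply Finset.sum_congr rfl
      intro k _
      rw [hSsymm j k]
    rw [h2, ← Finset.sum_add_distrib]
    simp
  · intro c v hv hev
    set Zc := (BWC n m S).map (fun x => (x : ℂ)) with hZc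
    have heq : ∀ j, (∑ i, v i * Zc i j) = c * v j := by
      intro j
      have := congrFun hev j
      simpa [Matrix.vecMul, dotProduct] using this
    set M : ℝ := ∑ j, m j * Complex.normSq (v j) with hMdef
    have hM : 0 < M := by
      obtain ⟨j, hj⟩ := Function.ne_iff.mp hv
      apply Finset.sum_pos'
      · intro i _
        exact mul_nonneg (hm i).le (Complex.normSq_nonneg _)
      · exact ⟨j, Finset.mem_univ j,
          mul_pos (hm j) (by simpa [Complex.normSq_pos] using hj)⟩
    set g : Fin n → Fin n → ℂ := fun i j =>
      ((m i * m j * S i j : ℝ) : ℂ) * (v j - v i) * (starRingEnd ℂ) (v j) with hg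
    have key1 : c * (M : ℂ) = ∑ j, ∑ i, g i j := by
      have hMc : (M : ℂ) = ∑ j, (m j : ℂ) * (v j * (starRingEnd ℂ) (v j)) := by
        rw [hMdef]
        push_cast
        refine Finset.sum_congr rfl fun j _ => ?_
        rw [Complex.mul_conj]
      rw [hMc, Finset.mul_sum]
      refine Finset.sum_congr rfl fun j _ => ?_
      have hstep : c * ((m j : ℂ) * (v j * (starRingEnd ℂ) (v j)))
          = (∑ i, v i * Zc i j) * ((m j : ℂ) * (starRingEnd ℂ) (v j)) := by
        rw [heq j]; ring
      rw [hstep]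
      have hcol : ∑ i, v i * Zc i j
          = ∑ i ∈ Finset.univ.erase j, ((m i * S i j : ℝ) : ℂ) * (v j - v i) := by
        rw [← Finset.add_sum_erase _ _ (Finset.mem_univ j)]
        have hdiag : v j * Zc j j
            = ∑ k ∈ Finset.univ.erase j, ((m k * S k j : ℝ) : ℂ) * v j := by
          simp only [hZc, Matrix.map_apply, BWC, Matrix.of_apply, if_pos rfl]
          push_cast
          rw [Finset.mul_sum]
          refine Finset.sum_congr rfl fun k hk => ?_
          rw [hSsymm j k]; ring
        have hoff : ∀ i ∈ Finset.univ.erase j, v i * Zc i j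
            = -(((m i * S i j : ℝ) : ℂ) * v i) := by
          intro i hi
          simp only [hZc, Matrix.map_apply, BWC, Matrix.of_apply,
            if_neg (Finset.ne_of_mem_erase hi)]
          push_cast
          ring
        rw [hdiag, Finset.sum_congr rfl hoff, ← Finset.sum_add_distrib]
        refine Finset.sum_congr rfl fun i _ => ?_
        ring
      have hgz : g j j = 0 := by simp [hg]
      rw [← Finset.add_sum_erase _ (fun i => g i j) (Finset.mem_univ j), hgz, zero_add]
      rw [hcol, Finset.sum_mul]
      refine Finset.sum_congr rfl fun i _ => ?_
      simp only [hg]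
      push_cast
      ring
    set R : ℝ := (∑ j, ∑ i, (m i * m j * S i j) * Complex.normSq (v j - v i)) / 2
      with hRdef
    have key2 : (∑ j, ∑ i, g i j) = (R : ℂ) := by
      have h2 : (2 : ℂ) * (∑ j, ∑ i, g i j)
          = ∑ j, ∑ i, (((m i * m j * S i j) * Complex.normSq (v j - v i) : ℝ) : ℂ) := by
        have hswap : (∑ j, ∑ i, g i j) = ∑ j, ∑ i, g j i := Finset.sum_comm
        calc (2 : ℂ) * (∑ j, ∑ i, g i j)
            = (∑ j, ∑ i, g i j) + (∑ j, ∑ i, g j i) := by rw [← hswap]; ring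
          _ = ∑ j, ∑ i, (g i j + g j i) := by
              rw [← Finset.sum_add_distrib]
              refine Finset.sum_congr rfl fun j _ => ?_
              rw [← Finset.sum_add_distrib]
          _ = _ := by
              refine Finset.sum_congr rfl fun j _ => Finset.sum_congr rfl fun i _ => ?_
              simp only [hg]
              have hS : S j i = S i j := hSsymm j i
              have hc : ((v j - v i) * (starRingEnd ℂ) (v j - v i))
                  = ((Complex.normSq (v j - v i) : ℝ) : ℂ) := Complex.mul_conj _
              have : (starRingEnd ℂ) (v j - v i)
                  = (starRingEnd ℂ) (v j) - (starRingEnd ℂ) (v i) := map_sub _ _ _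
              push_cast [hS]
              rw [← hc, this]
              ring
      have : (∑ j, ∑ i, g i j) = (∑ j, ∑ i,
          (((m i * m j * S i j) * Complex.normSq (v j - v i) : ℝ) : ℂ)) / 2 := by
        field_simp at h2 ⊢
        linear_combination h2
      rw [this, hRdef]
      push_cast
      ring
    have hR : 0 ≤ R := by
      rw [hRdef]
      apply div_nonneg _ (by norm_num)
      apply Finset.sum_nonneg
      intro j _
      apply Finset.sum_nonneg
      intro i _
      rcases eq_or_ne i j with h | h
      · simp [h]
      · exact mul_nonneg (mul_nonneg (mul_nonneg (hm i).le (hm j).le)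
          (hSpos i j h).le) (Complex.normSq_nonneg _)
    refine ⟨R / M, div_nonneg hR hM.le, ?_⟩
    have hMne : (M : ℂ) ≠ 0 := by
      exact_mod_cast ne_of_gt hM
    rw [key2] at key1
    field_simp
    push_cast
    rw [eq_div_iff hMne]
    linear_combination key1
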